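/- Define g : ℝ → ℝ by g(x) := |x| − x, so K := {x ∈ ℝ : g(x) ≤ 0} = [0, +∞). Let C := (−∞, 0], K̃ := C ∩ K = {0}, and x̄ := 0. Then: g is tangentially convex at x̄ with g'(x̄, ν) = |ν| − ν and ∂_T g(x̄) = [−2, 0]; K is nearly convex at x̄; {C, K} has the strong CHIP at x̄, namely (K̃ − x̄)° = ℝ = (C − x̄)° + (K − x̄)° with (K − x̄)° = (−∞,0] and (C − x̄)° = [0,+∞); but D(x̄) = [0,+∞) ⊄ {0} = T_{K̃}(x̄), so the non-smooth Abadie constraint qualification fails at x̄. Hence the strong CHIP at x̄ does not imply the non-smooth Abadie constraint qualification at x̄. -/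

import Mathlib

open Filter Set Pointwise
open scoped Topology RealInnerProductSpace

noncomputable section

variable {E : Type*} [NormedAddCommGroup E] [InnerProductSpace ℝ E]

/-- Directional derivative of `f` at `x` in direction `v`, as the limit of difference
quotients as `α → 0⁺` (defined via `limUnder`; meaningful when the limit exists). -/
noncomputable def dirDeriv (f : E → ℝ) (x v : E) : ℝ :=
  limUnder (𝓝[>] (0:ℝ)) (fun α : ℝ => (f (x + α • v) - f x) / α)

/-- `f` is tangentially convex at `x`: the directional derivative exists (and is finite)
in every direction, and `v ↦ f'(x, v)` is convex. -/
def TangentiallyConvexAt (f : E → ℝ) (x : E) : Prop :=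
  (∀ v : E, Tendsto (fun α : ℝ => (f (x + α • v) - f x) / α) (𝓝[>] (0:ℝ))
      (𝓝 (dirDeriv f x v)))
  ∧ ConvexOn ℝ Set.univ (dirDeriv f x)

/-- The tangential subdifferential `∂_T f (x)`. -/
def tangSubdiff (f : E → ℝ) (x : E) : Set E :=
  {p : E | ∀ v : E, ⟪p, v⟫ ≤ dirDeriv f x v}

/-- The polar cone `(W - x)°`. -/
def polarOf (W : Set E) (x : E) : Set E :=
  {l : E | ∀ y ∈ W, ⟪l, y - x⟫ ≤ 0}

/-- The contingent (Bouligand tangent) cone of `U` at `x`. -/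
def contingentCone (U : Set E) (x : E) : Set E :=
  {v : E | ∃ (a : ℕ → ℝ) (w : ℕ → E), (∀ k, 0 < a k) ∧
    Tendsto a atTop (𝓝 0) ∧ Tendsto w atTop (𝓝 v) ∧ ∀ k, x + a k • w k ∈ U}

/-- `V` is nearly convex at `x ∈ V`. -/
def NearlyConvexAt (V : Set E) (x : E) : Prop :=
  ∀ y ∈ V, ∃ t : ℕ → ℝ, (∀ k, 0 < t k) ∧ Tendsto t atTop (𝓝 0) ∧
    ∀ᶠ k in atTop, x + t k • (y - x) ∈ V

/-- The non-smooth linearized tangential cone `D(x)`. -/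
def linTangCone {m : ℕ} (g : Fin m → E → ℝ) (x : E) : Set E :=
  {v : E | ∀ j : Fin m, g j x = 0 → ∀ η ∈ tangSubdiff (g j) x, ⟪v, η⟫ ≤ 0}

/-- The set `M(x)` of nonnegative combinations of tangential subgradients of active
constraints. -/
def Mset {m : ℕ} (g : Fin m → E → ℝ) (x : E) : Set E :=
  {u : E | ∃ (lam : Fin m → ℝ) (η : Fin m → E),
    (∀ j, 0 ≤ lam j) ∧ (∀ j, lam j * g j x = 0) ∧
    (∀ j, η j ∈ tangSubdiff (g j) x) ∧ u = ∑ j, lam j • η j}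

/-- `w = P_W(x)`: `w` is a best approximation of `x` from `W`. -/
def IsBestApprox (W : Set E) (x w : E) : Prop :=
  w ∈ W ∧ ∀ u ∈ W, ‖x - w‖ ≤ ‖x - u‖

/-- The convex subdifferential of `h` at `x₀`. -/
def convexSubdiff (h : E → ℝ) (x₀ : E) : Set E :=
  {p : E | ∀ y : E, ⟪p, y - x₀⟫ ≤ h y - h x₀}


/-- The constraint function family of Example 3.1: `g(x) = |x| - x`. -/
def exg15 : Fin 1 → ℝ → ℝ := ![fun x => |x| - x]

/-- The constraint set of Example 3.1: `K = {x : |x| - x ≤ 0}`. -/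
def exK15 : Set ℝ := {x | ∀ j : Fin 1, exg15 j x ≤ 0}

/-- The set `C` of Example 3.1. -/
def exC15 : Set ℝ := Set.Iic 0

/-- Example 3.1: with `g(x) = |x| - x`, `K = [0, ∞)`, `C = (-∞, 0]` and
`x̄ = 0`, `g` is tangentially convex at `x̄` with `g'(x̄, ν) = |ν| - ν` and
`∂_T g(x̄) = [-2, 0]`, `K` is nearly convex at `x̄`, `{C, K}` has the strong CHIP at `x̄`,
but `D(x̄) = [0, ∞) ⊄ {0} = T_{K̃}(x̄)`, i.e. NACQ fails at `x̄`. -/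
lemma inner_real_eq (p v : ℝ) : ⟪p, v⟫ = p * v := by simp [real_inner_comm]; ring

lemma exg15_apply (x : ℝ) : exg15 0 x = |x| - x := rfl

lemma exg15_tendsto (v : ℝ) :
    Tendsto (fun α : ℝ => (exg15 0 (0 + α • v) - exg15 0 0) / α) (𝓝[>] (0:ℝ))
      (𝓝 (|v| - v)) := by
  apply tendsto_const_nhds.congr'
  filter_upwards [self_mem_nhdsWithin] with α (hα : (0:ℝ) < α)
  simp only [exg15_apply, zero_add, smul_eq_mul, abs_zero, sub_zero, abs_mul, abs_of_pos hα]
  field_simp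

lemma exg15_dirDeriv (v : ℝ) : dirDeriv (exg15 0) 0 v = |v| - v :=
  (exg15_tendsto v).limUnder_eq

theorem example_strongCHIP_without_NACQ :
    exK15 = Set.Ici 0 ∧
    TangentiallyConvexAt (exg15 0) 0 ∧
    (∀ v : ℝ, dirDeriv (exg15 0) 0 v = |v| - v) ∧
    tangSubdiff (exg15 0) 0 = Set.Icc (-2) 0 ∧
    NearlyConvexAt exK15 0 ∧
    polarOf (exC15 ∩ exK15) 0 = Set.univ ∧
    polarOf exK15 0 = Set.Iic 0 ∧
    polarOf exC15 0 = Set.Ici 0 ∧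
    polarOf (exC15 ∩ exK15) 0 = polarOf exC15 0 + polarOf exK15 0 ∧
    linTangCone exg15 0 = Set.Ici 0 ∧
    contingentCone (exC15 ∩ exK15) 0 = {0} ∧
    ¬ linTangCone exg15 0 ⊆ contingentCone (exC15 ∩ exK15) 0 := by
  have hK : exK15 = Set.Ici 0 := by
    ext x
    simp only [exK15, mem_setOf_eq, Fin.forall_fin_one, exg15_apply, mem_Ici, sub_nonpos]
    exact ⟨fun h => le_trans (abs_nonneg x) h, fun h => le_of_eq (abs_of_nonneg h)⟩
  have hTC : TangentiallyConvexAt (exg15 0) 0 := by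
    constructor
    · intro v
      rw [exg15_dirDeriv]
      exact exg15_tendsto v
    · have h : ConvexOn ℝ (Set.univ : Set ℝ) (fun v : ℝ => ‖v‖) := convexOn_univ_norm
      have := h.sub (concaveOn_id convex_univ)
      simp only [Real.norm_eq_abs] at this
      convert this using 1
      case e'_12 =>
        ext v
        exact exg15_dirDeriv v
      all_goals rfl
  have hTS : tangSubdiff (exg15 0) 0 = Set.Icc (-2) 0 := by
    ext p
    simp only [tangSubdiff, mem_setOf_eq, exg15_dirDeriv, inner_real_eq, mem_Icc]
    constructor
    · intro h
      have h1 := h 1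
      have h2 := h (-1)
      norm_num at h1 h2
      exact ⟨by linarith, h1⟩
    · rintro ⟨h1, h2⟩ v
      rcases le_or_gt 0 v with hv | hv
      · rw [abs_of_nonneg hv]
        nlinarith
      · rw [abs_of_neg hv]
        nlinarith
  have hNC : NearlyConvexAt exK15 0 := by
    intro y hy
    rw [hK, mem_Ici] at hy
    refine ⟨fun k => 1 / (k + 1), fun k => by positivity,
      tendsto_one_div_add_atTop_nhds_zero_nat, ?_⟩
    filter_upwards with k
    rw [hK, mem_Ici]
    simp only [zero_add, smul_eq_mul, sub_zero]
    positivity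
  have hCK : exC15 ∩ exK15 = {(0:ℝ)} := by
    rw [hK, exC15, Set.Iic_inter_Ici, Set.Icc_self]
  have hP1 : polarOf (exC15 ∩ exK15) 0 = Set.univ := by
    ext l
    simp [polarOf, hCK]
  have hPK : polarOf exK15 0 = Set.Iic 0 := by
    ext l
    simp only [polarOf, hK, mem_setOf_eq, mem_Ici, sub_zero, inner_real_eq, mem_Iic]
    exact ⟨fun h => by nlinarith [h 1 zero_le_one], fun h y hy => mul_nonpos_of_nonpos_of_nonneg h hy⟩
  have hPC : polarOf exC15 0 = Set.Ici 0 := by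
    ext l
    simp only [polarOf, exC15, mem_setOf_eq, mem_Iic, sub_zero, inner_real_eq, mem_Ici]
    exact ⟨fun h => by nlinarith [h (-1) (by norm_num)],
      fun h y hy => mul_nonpos_of_nonneg_of_nonpos h hy⟩
  have hSum : polarOf (exC15 ∩ exK15) 0 = polarOf exC15 0 + polarOf exK15 0 := by
    rw [hP1, hPC, hPK]
    ext r
    simp only [mem_univ, true_iff, Set.mem_add, mem_Ici, mem_Iic]
    exact ⟨max r 0, le_max_right _ _, min r 0, min_le_right _ _, by
      rw [max_add_min, add_zero]⟩
  have hLin : linTangCone exg15 0 = Set.Ici 0 := by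
    ext v
    simp only [linTangCone, mem_setOf_eq, Fin.forall_fin_one, hTS, mem_Icc, mem_Ici,
      inner_real_eq]
    constructor
    · intro h
      have := h (by simp [exg15_apply]) (-1) ⟨by norm_num, by norm_num⟩
      nlinarith
    · intro hv _ η ⟨_, hη⟩
      exact mul_nonpos_of_nonneg_of_nonpos hv hη
  have hCont : contingentCone (exC15 ∩ exK15) 0 = {(0:ℝ)} := by
    rw [hCK]
    ext v
    simp only [contingentCone, mem_setOf_eq, mem_singleton_iff]
    constructor
    · rintro ⟨a, w, hpos, _, hw, hmem⟩
      have hw0 : ∀ k, w k = 0 := by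
        intro k
        have := hmem k
        simp only [zero_add, smul_eq_mul, mem_singleton_iff, mul_eq_zero] at this
        exact this.resolve_left (hpos k).ne'
      have : Tendsto w atTop (𝓝 0) := by
        simp only [funext hw0]
        exact tendsto_const_nhds
      exact tendsto_nhds_unique hw this
    · rintro rfl
      exact ⟨fun k => 1 / (k + 1), fun _ => 0, fun k => by positivity,
        tendsto_one_div_add_atTop_nhds_zero_nat, tendsto_const_nhds, fun k => by simp⟩
  refine ⟨hK, hTC, exg15_dirDeriv, hTS, hNC, hP1, hPK, hPC, hSum, hLin, hCont, ?_⟩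
  rw [hLin, hCont]
  intro h
  have := h (show (1:ℝ) ∈ Set.Ici 0 by norm_num)
  simp at this


end
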